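/- 0 minimizes f(x) = ‖Ax - y‖₂²/2 + ‖x‖₁ if and only if for every s ∈ R^p with ‖s‖₁ = 1 and As ≠ 0, the quantity ω(s) = (1 - ⟨As, y⟩)/‖As‖₂ is nonnegative, and for every s with ‖s‖₁ = 1 and As = 0 the map r ↦ f(rs) is nondecreasing. -/
import Mathlib


open Real

private lemma expand_sum' {n : ℕ} (v y : Fin n → ℝ) (r : ℝ) :
    ∑ i, (r * v i - y i)^2
      = r^2 * ∑ i, (v i)^2 - 2*r*(∑ i, v i * y i) + ∑ i, (y i)^2 := by
  rw [Finset.mul_sum, Finset.mul_sum, ← Finset.sum_sub_distrib, ← Finset.sum_add_distrib]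
  exact Finset.sum_congr rfl (fun i _ => by ring)

private lemma expand_sum1 {n : ℕ} (w y : Fin n → ℝ) :
    ∑ i, (w i - y i)^2
      = ∑ i, (w i)^2 - 2*(∑ i, w i * y i) + ∑ i, (y i)^2 := by
  rw [Finset.mul_sum, ← Finset.sum_sub_distrib, ← Finset.sum_add_distrib]
  exact Finset.sum_congr rfl (fun i _ => by ring)

theorem stmt7 (p n : ℕ) (hp : 1 ≤ p) (hn : 1 ≤ n)
    (A : Matrix (Fin n) (Fin p) ℝ) (y : Fin n → ℝ) :
    (∀ x : Fin p → ℝ,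
        (∑ i, (A.mulVec 0 i - y i)^2) / 2 + (∑ j, |(0 : Fin p → ℝ) j|)
          ≤ (∑ i, (A.mulVec x i - y i)^2) / 2 + ∑ j, |x j|)
    ↔ ((∀ s : Fin p → ℝ, (∑ j, |s j|) = 1 → A.mulVec s ≠ 0 →
          0 ≤ (1 - ∑ i, A.mulVec s i * y i) / Real.sqrt (∑ i, (A.mulVec s i)^2)) ∧
        (∀ s : Fin p → ℝ, (∑ j, |s j|) = 1 → A.mulVec s = 0 →
          MonotoneOn (fun r : ℝ =>
            (∑ i, (A.mulVec (r • s) i - y i)^2) / 2 + ∑ j, |(r • s) j|)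
            (Set.Ici (0:ℝ)))) := by
  have hL : (∑ i, (A.mulVec (0 : Fin p → ℝ) i - y i)^2) / 2 + (∑ j, |(0 : Fin p → ℝ) j|)
      = (∑ i, (y i)^2) / 2 := by
    simp [Matrix.mulVec_zero]
  constructor
  · intro hmin
    constructor
    · intro s hs hAs
      set v := A.mulVec s with hv
      have hv2 : 0 < ∑ i, (v i)^2 := by
        rcases Function.ne_iff.mp hAs with ⟨i, hi⟩
        exact Finset.sum_pos' (fun j _ => sq_nonneg _)
          ⟨i, Finset.mem_univ i, pow_two_pos_of_ne_zero hi⟩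
      set S := ∑ i, (v i)^2 with hS
      set C := ∑ i, v i * y i with hC
      have key : ∀ r : ℝ, 0 < r → 0 ≤ r * S / 2 + (1 - C) := by
        intro r hr
        have h := hmin (r • s)
        have e1 : ∀ i, A.mulVec (r • s) i = r * v i := by
          intro i; rw [Matrix.mulVec_smul]; rfl
        have e2 : ∑ j, |(r • s) j| = r := by
          simp only [Pi.smul_apply, smul_eq_mul, abs_mul, ← Finset.mul_sum, hs,
            mul_one, abs_of_pos hr]
        rw [hL] at h
        simp only [e1, e2] at h
        rw [expand_sum'] at h
        nlinarith [h, hr, mul_pos hr hr]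
      have hnum : 0 ≤ 1 - C := by
        by_contra hc
        push_neg at hc
        have h2 := key ((C - 1)/S) (div_pos (by linarith) hv2)
        rw [div_mul_cancel₀ _ (ne_of_gt hv2)] at h2
        linarith
      exact div_nonneg hnum (Real.sqrt_nonneg _)
    · intro s hs hAs0
      have key : ∀ r : ℝ,
          (∑ i, (A.mulVec (r • s) i - y i)^2)/2 + ∑ j, |(r • s) j|
            = (∑ i, (y i)^2)/2 + |r| := by
        intro r
        rw [Matrix.mulVec_smul, hAs0]
        simp [abs_mul, ← Finset.mul_sum, hs]
      intro a ha b hb hab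
      simp only [key]
      rw [abs_of_nonneg (Set.mem_Ici.mp ha), abs_of_nonneg (Set.mem_Ici.mp hb)]
      linarith
  · rintro ⟨h1, -⟩ x
    rw [hL]
    by_cases hx : x = 0
    · subst hx
      rw [hL]
    · set r := ∑ j, |x j| with hrdef
      have hr : 0 < r := by
        rcases Function.ne_iff.mp hx with ⟨j, hj⟩
        exact Finset.sum_pos' (fun j _ => abs_nonneg _)
          ⟨j, Finset.mem_univ j, abs_pos.mpr hj⟩
      set s := r⁻¹ • x with hsdef
      have hs1 : ∑ j, |s j| = 1 := by
        simp only [hsdef, Pi.smul_apply, smul_eq_mul, abs_mul, ← Finset.mul_sum,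
          abs_of_pos (inv_pos.mpr hr)]
        exact inv_mul_cancel₀ hr.ne'
      have hvs : A.mulVec s = r⁻¹ • A.mulVec x := by
        rw [hsdef, Matrix.mulVec_smul]
      set w := A.mulVec x with hw
      have hsum_w_sq : (0:ℝ) ≤ ∑ i, (w i)^2 :=
        Finset.sum_nonneg (fun i _ => sq_nonneg _)
      have hexp : ∑ i, (w i - y i)^2
          = ∑ i, (w i)^2 - 2*(∑ i, w i * y i) + ∑ i, (y i)^2 := expand_sum1 w y
      by_cases hAs : A.mulVec s = 0
      · have hw0 : w = 0 := by
          have h0 : r⁻¹ • w = 0 := by rw [← hvs]; exact hAs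
          have := congrArg (fun u : Fin n → ℝ => r • u) h0
          simpa [smul_smul, mul_inv_cancel₀ hr.ne'] using this
        rw [hexp, hw0]
        simp only [Pi.zero_apply]
        simp
        linarith
      · have h := h1 s hs1 hAs
        have hden : 0 < ∑ i, (A.mulVec s i)^2 := by
          rcases Function.ne_iff.mp hAs with ⟨i, hi⟩
          exact Finset.sum_pos' (fun j _ => sq_nonneg _)
            ⟨i, Finset.mem_univ i, pow_two_pos_of_ne_zero hi⟩
        have hdpos : 0 < Real.sqrt (∑ i, (A.mulVec s i)^2) := Real.sqrt_pos.mpr hden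
        have hnum : 0 ≤ 1 - ∑ i, A.mulVec s i * y i := by
          rcases div_nonneg_iff.mp h with ⟨h', _⟩ | ⟨_, h'⟩
          · exact h'
          · linarith
        have hmv : ∀ i, A.mulVec s i = r⁻¹ * w i := by
          intro i; rw [hvs]; rfl
        simp only [hmv] at hnum
        have hsum' : ∑ i, r⁻¹ * w i * y i = r⁻¹ * ∑ i, w i * y i := by
          rw [Finset.mul_sum]
          exact Finset.sum_congr rfl (fun i _ => by ring)
        rw [hsum'] at hnum
        have hkey : 0 ≤ r - ∑ i, w i * y i := by
          have hm := mul_nonneg hr.le hnum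
          have : r * (1 - r⁻¹ * ∑ i, w i * y i) = r - ∑ i, w i * y i := by
            field_simp
          linarith [this ▸ hm]
        rw [hexp]
        linarith
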